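/- arXiv:2402.15785 — 2 statements merged into one kernel-verified Lean document; each statement's English description precedes it below -/
import Mathlib

section
/- Let β be a Schwartz function on R^n whose Fourier transform is supported in {10/11 ≤ |ξ| ≤ 11/10}, let N ∈ N, set ζ_N = 10N, and K(y) := β(y − 2^{ζ_N} e_1). Then for any λ ≥ 0, D_λ(K) := ∫_{R^n} |K(y)|(log(e+|y|))^λ dy is comparable to N^λ, with implicit constants depending only on n, λ, and β (not on N). -/
set_option maxHeartbeats 1000000

open MeasureTheory Metric
open scoped ENNReal NNReal FourierTransform SchwartzMap

lemma stmt10_he2 : (2:ℝ) ≤ Real.exp 1 := by nlinarith [Real.add_one_le_exp (1:ℝ)]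

lemma stmt10_one_le_log {t : ℝ} (ht : 0 ≤ t) : 1 ≤ Real.log (Real.exp 1 + t) := by
  have := Real.log_le_log (Real.exp_pos 1) (by linarith : Real.exp 1 ≤ Real.exp 1 + t)
  simpa [Real.log_exp] using this

lemma stmt10_log_le {t : ℝ} (ht : 0 ≤ t) : Real.log (Real.exp 1 + t) ≤ 1 + t := by
  have h1 : Real.exp 1 + t ≤ Real.exp 1 * (1 + t) := by nlinarith [stmt10_he2]
  have h2 := Real.log_le_log (by positivity) h1
  rw [Real.log_mul (Real.exp_ne_zero 1) (by positivity), Real.log_exp] at h2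
  have h3 := Real.log_le_sub_one_of_pos (show (0:ℝ) < 1 + t by linarith)
  linarith

lemma stmt10_log_add {a b : ℝ} (ha : 0 ≤ a) (hb : 0 ≤ b) :
    Real.log (Real.exp 1 + (a + b)) ≤ Real.log (Real.exp 1 + a) + Real.log (Real.exp 1 + b) := by
  have he := stmt10_he2
  have h1 : Real.exp 1 + (a + b) ≤ (Real.exp 1 + a) * (Real.exp 1 + b) := by nlinarith
  have h2 := Real.log_le_log (by positivity) h1
  rwa [Real.log_mul (by positivity) (by positivity)] at h2

lemma stmt10_pow_bound (k : ℕ) {t : ℝ} (ht : 0 ≤ t) : (1 + t) ^ k ≤ 2 ^ k * (1 + t ^ k) := by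
  rcases le_total t 1 with h | h
  · calc (1 + t) ^ k ≤ 2 ^ k := pow_le_pow_left₀ (by linarith) (by linarith) k
      _ ≤ 2 ^ k * (1 + t ^ k) := le_mul_of_one_le_right (by positivity)
          (by nlinarith [pow_nonneg ht k])
  · calc (1 + t) ^ k ≤ (2 * t) ^ k := pow_le_pow_left₀ (by linarith) (by linarith) k
      _ = 2 ^ k * t ^ k := mul_pow 2 t k
      _ ≤ 2 ^ k * (1 + t ^ k) := by
          have h2 : (0:ℝ) ≤ 2 ^ k := by positivity
          nlinarith [pow_nonneg ht k]

/-- For a nontrivial Schwartz `β` with `𝓕β` supported in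
`{10/11 ≤ |ξ| ≤ 11/10}` and `K(y) = β(y − 2^{10N}e₁)`, the quantity
`D_λ(K) = ∫ |K(y)|(log(e+|y|))^λ dy` is comparable to `N^λ`, uniformly in `N ≥ 1`. -/
theorem stmt10 (n : ℕ) (hn : 0 < n) (lam : ℝ) (hlam : 0 ≤ lam)
    (β : SchwartzMap (EuclideanSpace ℝ (Fin n)) ℂ) (hβne : ∃ x, β x ≠ 0)
    (hsupp : ∀ ξ : EuclideanSpace ℝ (Fin n),
      𝓕 (β : EuclideanSpace ℝ (Fin n) → ℂ) ξ ≠ 0 → 10 / 11 ≤ ‖ξ‖ ∧ ‖ξ‖ ≤ 11 / 10) :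
    ∃ C : ℝ, 0 < C ∧
      ∀ N : ℕ, 1 ≤ N →
        C⁻¹ * (N : ℝ) ^ lam ≤
          (∫ y : EuclideanSpace ℝ (Fin n),
            ‖β (y - (2 : ℝ) ^ (10 * N) • EuclideanSpace.single (⟨0, hn⟩ : Fin n) (1 : ℝ))‖ *
              (Real.log (Real.exp 1 + ‖y‖)) ^ lam) ∧
        (∫ y : EuclideanSpace ℝ (Fin n),
            ‖β (y - (2 : ℝ) ^ (10 * N) • EuclideanSpace.single (⟨0, hn⟩ : Fin n) (1 : ℝ))‖ *
              (Real.log (Real.exp 1 + ‖y‖)) ^ lam) ≤ C * (N : ℝ) ^ lam := by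
  classical
  have hk : lam ≤ ((⌈lam⌉₊ : ℕ) : ℝ) := Nat.le_ceil lam
  set k : ℕ := ⌈lam⌉₊ with hkdef
  set e1 : EuclideanSpace ℝ (Fin n) := EuclideanSpace.single (⟨0, hn⟩ : Fin n) (1 : ℝ) with he1
  -- continuity
  have hcont : ∀ v : EuclideanSpace ℝ (Fin n), Continuous
      (fun z : EuclideanSpace ℝ (Fin n) => ‖β z‖ * (Real.log (Real.exp 1 + ‖z + v‖)) ^ lam) := by
    intro v
    have h1 : Continuous (fun z : EuclideanSpace ℝ (Fin n) => Real.exp 1 + ‖z + v‖) :=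
      continuous_const.add ((continuous_id.add continuous_const).norm)
    exact (β.continuous.norm).mul
      (Continuous.rpow_const (h1.log (fun z => by positivity)) (fun x => Or.inr hlam))
  -- base integrability with polynomial weight
  have Ik : Integrable (fun z : EuclideanSpace ℝ (Fin n) => ‖β z‖ * (1 + ‖z‖) ^ k) := by
    have h1 : Integrable
        (fun z : EuclideanSpace ℝ (Fin n) => (2:ℝ) ^ k * (‖β z‖ + ‖z‖ ^ k * ‖β z‖)) :=
      ((β.integrable.norm).add (β.integrable_pow_mul volume k)).const_mul _
    refine h1.mono' ((β.continuous.norm.mul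
      ((continuous_const.add continuous_norm).pow k))).aestronglyMeasurable ?_
    filter_upwards with z
    rw [Real.norm_of_nonneg (by positivity)]
    have hb := stmt10_pow_bound k (norm_nonneg z)
    nlinarith [norm_nonneg (β z), pow_nonneg (norm_nonneg z) k,
      mul_le_mul_of_nonneg_left hb (norm_nonneg (β z))]
  -- integrability of shifted integrand
  have hint : ∀ v : EuclideanSpace ℝ (Fin n), Integrable
      (fun z : EuclideanSpace ℝ (Fin n) =>
        ‖β z‖ * (Real.log (Real.exp 1 + ‖z + v‖)) ^ lam) := by
    intro v
    refine (Ik.const_mul ((1 + ‖v‖) ^ k)).mono' (hcont v).aestronglyMeasurable ?_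
    filter_upwards with z
    have hlog1 : (1:ℝ) ≤ Real.log (Real.exp 1 + ‖z + v‖) := stmt10_one_le_log (norm_nonneg _)
    rw [Real.norm_of_nonneg (mul_nonneg (norm_nonneg _)
      (Real.rpow_nonneg (by linarith) lam))]
    have h1 : (Real.log (Real.exp 1 + ‖z + v‖)) ^ lam ≤ ((1 + ‖v‖) * (1 + ‖z‖)) ^ k := by
      calc (Real.log (Real.exp 1 + ‖z + v‖)) ^ lam
          ≤ (Real.log (Real.exp 1 + ‖z + v‖)) ^ ((k:ℕ):ℝ) :=
            Real.rpow_le_rpow_of_exponent_le hlog1 hk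
        _ = (Real.log (Real.exp 1 + ‖z + v‖)) ^ k := Real.rpow_natCast _ k
        _ ≤ (1 + ‖z + v‖) ^ k :=
            pow_le_pow_left₀ (by linarith) (stmt10_log_le (norm_nonneg _)) k
        _ ≤ ((1 + ‖v‖) * (1 + ‖z‖)) ^ k := by
            refine pow_le_pow_left₀ (by positivity) ?_ k
            nlinarith [norm_add_le z v, norm_nonneg z, norm_nonneg v]
    calc ‖β z‖ * (Real.log (Real.exp 1 + ‖z + v‖)) ^ lam
        ≤ ‖β z‖ * ((1 + ‖v‖) * (1 + ‖z‖)) ^ k :=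
          mul_le_mul_of_nonneg_left h1 (norm_nonneg _)
      _ = (1 + ‖v‖) ^ k * (‖β z‖ * (1 + ‖z‖) ^ k) := by rw [mul_pow]; ring
  -- change of variables
  have hchg : ∀ v : EuclideanSpace ℝ (Fin n),
      (∫ y : EuclideanSpace ℝ (Fin n),
        ‖β (y - v)‖ * (Real.log (Real.exp 1 + ‖y‖)) ^ lam)
      = ∫ z : EuclideanSpace ℝ (Fin n),
          ‖β z‖ * (Real.log (Real.exp 1 + ‖z + v‖)) ^ lam := by
    intro v
    rw [← integral_sub_right_eq_self
      (fun z : EuclideanSpace ℝ (Fin n) =>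
        ‖β z‖ * (Real.log (Real.exp 1 + ‖z + v‖)) ^ lam) v]
    congr 1
    funext y
    simp
  -- the unshifted weight integral
  set J : ℝ := ∫ z : EuclideanSpace ℝ (Fin n),
      ‖β z‖ * (Real.log (Real.exp 1 + ‖z‖)) ^ lam with hJdef
  have hJ0 : 0 ≤ J := integral_nonneg (fun z => mul_nonneg (norm_nonneg _)
    (Real.rpow_nonneg (by linarith [stmt10_one_le_log (norm_nonneg z)]) lam))
  have hJint : Integrable (fun z : EuclideanSpace ℝ (Fin n) =>
      ‖β z‖ * (Real.log (Real.exp 1 + ‖z‖)) ^ lam) := by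
    have := hint 0
    simpa using this
  -- upper bound for each shift
  have hup : ∀ v : EuclideanSpace ℝ (Fin n),
      (∫ z : EuclideanSpace ℝ (Fin n),
        ‖β z‖ * (Real.log (Real.exp 1 + ‖z + v‖)) ^ lam)
      ≤ (2 * Real.log (Real.exp 1 + ‖v‖)) ^ lam * J := by
    intro v
    have hB : (1:ℝ) ≤ Real.log (Real.exp 1 + ‖v‖) := stmt10_one_le_log (norm_nonneg v)
    have step : ∫ z : EuclideanSpace ℝ (Fin n),
        ‖β z‖ * (Real.log (Real.exp 1 + ‖z + v‖)) ^ lam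
        ≤ ∫ z : EuclideanSpace ℝ (Fin n),
          (2 * Real.log (Real.exp 1 + ‖v‖)) ^ lam *
            (‖β z‖ * (Real.log (Real.exp 1 + ‖z‖)) ^ lam) := by
      refine integral_mono (hint v) (hJint.const_mul _) ?_
      intro z
      have hA : (1:ℝ) ≤ Real.log (Real.exp 1 + ‖z‖) := stmt10_one_le_log (norm_nonneg z)
      have h1 : Real.log (Real.exp 1 + ‖z + v‖)
          ≤ 2 * Real.log (Real.exp 1 + ‖v‖) * Real.log (Real.exp 1 + ‖z‖) := by
        have h2 : Real.log (Real.exp 1 + ‖z + v‖)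
            ≤ Real.log (Real.exp 1 + (‖z‖ + ‖v‖)) :=
          Real.log_le_log (by positivity) (by linarith [norm_add_le z v])
        have h3 := stmt10_log_add (norm_nonneg z) (norm_nonneg v)
        nlinarith
      have h4 : (Real.log (Real.exp 1 + ‖z + v‖)) ^ lam
          ≤ (2 * Real.log (Real.exp 1 + ‖v‖)) ^ lam *
            (Real.log (Real.exp 1 + ‖z‖)) ^ lam := by
        rw [← Real.mul_rpow (by linarith) (by linarith)]
        exact Real.rpow_le_rpow
          (by linarith [stmt10_one_le_log (norm_nonneg (z + v))]) h1 hlam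
      calc ‖β z‖ * (Real.log (Real.exp 1 + ‖z + v‖)) ^ lam
          ≤ ‖β z‖ * ((2 * Real.log (Real.exp 1 + ‖v‖)) ^ lam *
              (Real.log (Real.exp 1 + ‖z‖)) ^ lam) :=
            mul_le_mul_of_nonneg_left h4 (norm_nonneg _)
        _ = (2 * Real.log (Real.exp 1 + ‖v‖)) ^ lam *
              (‖β z‖ * (Real.log (Real.exp 1 + ‖z‖)) ^ lam) := by ring
    rwa [integral_const_mul] at step
  -- norm of the shift vector
  have hnormv : ∀ N : ℕ, ‖(2:ℝ) ^ (10 * N) • e1‖ = (2:ℝ) ^ (10 * N) := by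
    intro N
    rw [norm_smul, he1, EuclideanSpace.norm_single, Real.norm_eq_abs, Real.norm_eq_abs,
      abs_one, mul_one, abs_of_nonneg (by positivity)]
  -- bound on log(e + 2^{10N})
  have hBle : ∀ N : ℕ, 1 ≤ N → Real.log (Real.exp 1 + (2:ℝ) ^ (10 * N)) ≤ 9 * N := by
    intro N hN
    have ht : (2:ℝ) ≤ 2 ^ (10 * N) := by
      calc (2:ℝ) = 2 ^ 1 := (pow_one 2).symm
        _ ≤ 2 ^ (10 * N) := pow_le_pow_right₀ one_le_two (by omega)
    have h1 : Real.exp 1 + (2:ℝ) ^ (10 * N) ≤ Real.exp 1 * 2 ^ (10 * N) := by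
      nlinarith [stmt10_he2]
    have h2 := Real.log_le_log (by positivity) h1
    rw [Real.log_mul (Real.exp_ne_zero 1) (by positivity), Real.log_exp,
      Real.log_pow] at h2
    have hl2 := Real.log_two_lt_d9
    have hl2' := Real.log_two_gt_d9
    have hN' : (1:ℝ) ≤ N := by exact_mod_cast hN
    push_cast at h2
    nlinarith
  -- lower bound setup
  obtain ⟨x₀, hx₀⟩ := hβne
  set R₀ : ℝ := ‖x₀‖ + 1 with hR₀
  have hR₀pos : 0 < R₀ := by positivity
  set m : ℝ := ∫ z in ball (0 : EuclideanSpace ℝ (Fin n)) R₀, ‖β z‖ with hmdef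
  have hm : 0 < m := by
    rw [hmdef, setIntegral_pos_iff_support_of_nonneg_ae
      (ae_of_all _ (fun z => norm_nonneg (β z))) (β.integrable.norm.integrableOn)]
    have hUopen : IsOpen ({z : EuclideanSpace ℝ (Fin n) | β z ≠ 0} ∩ ball 0 R₀) :=
      (isOpen_compl_singleton.preimage β.continuous).inter isOpen_ball
    have hUne : ({z : EuclideanSpace ℝ (Fin n) | β z ≠ 0} ∩ ball 0 R₀).Nonempty :=
      ⟨x₀, hx₀, by rw [mem_ball_zero_iff]; linarith⟩
    refine lt_of_lt_of_le (hUopen.measure_pos volume hUne) (measure_mono ?_)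
    rintro z ⟨hz1, hz2⟩
    refine ⟨?_, hz2⟩
    simp only [Function.mem_support, ne_eq, norm_eq_zero]
    exact hz1
  set N₁ : ℕ := ⌈R₀⌉₊ + 1 with hN₁def
  have hN₁pos : 0 < N₁ := Nat.succ_pos _
  have hR₀N₁ : R₀ ≤ (N₁ : ℝ) := by
    have := Nat.le_ceil R₀
    push_cast [hN₁def]
    push_cast at this
    linarith
  have hcast2 : ∀ M : ℕ, (M : ℝ) ≤ 2 ^ M := by
    intro M
    exact_mod_cast (Nat.lt_two_pow_self (n := M)).le
  -- pointwise lower bound on the log weight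
  have hlow_pt : ∀ N : ℕ, 1 ≤ N → ∀ z : EuclideanSpace ℝ (Fin n), ‖z‖ < R₀ →
      ((N : ℝ) / N₁) ≤ Real.log (Real.exp 1 + ‖z + (2:ℝ) ^ (10 * N) • e1‖) := by
    intro N hN z hz
    by_cases hNN : N < N₁
    · have h1 : ((N : ℝ) / N₁) ≤ 1 := by
        apply div_le_one_of_le₀
        · exact_mod_cast hNN.le
        · positivity
      linarith [stmt10_one_le_log (norm_nonneg (z + (2:ℝ) ^ (10 * N) • e1))]
    · push_neg at hNN
      have hN₁N : (N₁ : ℝ) ≤ N := by exact_mod_cast hNN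
      have hvnorm := hnormv N
      have h1 : (2:ℝ) ^ (10 * N) - ‖z‖ ≤ ‖z + (2:ℝ) ^ (10 * N) • e1‖ := by
        have h2 := norm_sub_norm_le ((2:ℝ) ^ (10 * N) • e1) (-z)
        rw [sub_neg_eq_add, norm_neg, hvnorm, add_comm] at h2
        linarith
      have hsplit : (2:ℝ) ^ (10 * N) = 2 ^ (8 * N) * 2 ^ (2 * N) := by
        rw [← pow_add]; congr 1; omega
      have h4 : (4:ℝ) ≤ 2 ^ (2 * N) := by
        calc (4:ℝ) = 2 ^ 2 := by norm_num
          _ ≤ 2 ^ (2 * N) := pow_le_pow_right₀ one_le_two (by omega)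
      have hR8 : R₀ ≤ (2:ℝ) ^ (8 * N) := by
        calc R₀ ≤ (N₁ : ℝ) := hR₀N₁
          _ ≤ 2 ^ N₁ := hcast2 N₁
          _ ≤ 2 ^ (8 * N) := pow_le_pow_right₀ one_le_two (by omega)
      have h8 : (2:ℝ) ^ (8 * N) ≤ ‖z + (2:ℝ) ^ (10 * N) • e1‖ := by
        have hp : (0:ℝ) < 2 ^ (8 * N) := by positivity
        have hq : (2:ℝ) ^ (8 * N) * 4 ≤ 2 ^ (8 * N) * 2 ^ (2 * N) :=
          mul_le_mul_of_nonneg_left h4 hp.le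
        have hbig : (2:ℝ) ^ (8 * N) + R₀ ≤ 2 ^ (10 * N) := by
          rw [hsplit]; linarith
        linarith
      have hNr : (1:ℝ) ≤ N := by exact_mod_cast hN
      calc ((N : ℝ) / N₁) ≤ (N : ℝ) := by
            apply div_le_self (by positivity)
            exact_mod_cast hN₁pos
        _ ≤ 8 * N * Real.log 2 := by nlinarith [Real.log_two_gt_d9, hNr]
        _ = Real.log ((2:ℝ) ^ (8 * N)) := by rw [Real.log_pow]; push_cast; ring
        _ ≤ Real.log (Real.exp 1 + ‖z + (2:ℝ) ^ (10 * N) • e1‖) := by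
            apply Real.log_le_log (by positivity)
            linarith [Real.exp_pos 1]
  -- lower bound for the integral
  have hlowN : ∀ N : ℕ, 1 ≤ N →
      m / (N₁ : ℝ) ^ lam * (N : ℝ) ^ lam ≤
        ∫ z : EuclideanSpace ℝ (Fin n),
          ‖β z‖ * (Real.log (Real.exp 1 + ‖z + (2:ℝ) ^ (10 * N) • e1‖)) ^ lam := by
    intro N hN
    have hc : (0:ℝ) ≤ ((N : ℝ) / N₁) := by positivity
    have key1 : m * ((N : ℝ) / N₁) ^ lam
        = ∫ z in ball (0 : EuclideanSpace ℝ (Fin n)) R₀,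
            ‖β z‖ * ((N : ℝ) / N₁) ^ lam := by
      rw [integral_mul_const, hmdef]
    have key2 : (∫ z in ball (0 : EuclideanSpace ℝ (Fin n)) R₀,
          ‖β z‖ * ((N : ℝ) / N₁) ^ lam)
        ≤ ∫ z in ball (0 : EuclideanSpace ℝ (Fin n)) R₀,
            ‖β z‖ * (Real.log (Real.exp 1 + ‖z + (2:ℝ) ^ (10 * N) • e1‖)) ^ lam := by
      refine setIntegral_mono_on (β.integrable.norm.mul_const _).integrableOn
        ((hint _).integrableOn) measurableSet_ball ?_
      intro z hz
      rw [mem_ball_zero_iff] at hz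
      exact mul_le_mul_of_nonneg_left
        (Real.rpow_le_rpow hc (hlow_pt N hN z hz) hlam) (norm_nonneg _)
    have key3 : (∫ z in ball (0 : EuclideanSpace ℝ (Fin n)) R₀,
          ‖β z‖ * (Real.log (Real.exp 1 + ‖z + (2:ℝ) ^ (10 * N) • e1‖)) ^ lam)
        ≤ ∫ z : EuclideanSpace ℝ (Fin n),
            ‖β z‖ * (Real.log (Real.exp 1 + ‖z + (2:ℝ) ^ (10 * N) • e1‖)) ^ lam := by
      refine setIntegral_le_integral (hint _) (ae_of_all _ (fun z => ?_))
      exact mul_nonneg (norm_nonneg _) (Real.rpow_nonneg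
        (by linarith [stmt10_one_le_log (norm_nonneg (z + (2:ℝ) ^ (10 * N) • e1))]) lam)
    have key0 : m / (N₁ : ℝ) ^ lam * (N : ℝ) ^ lam = m * ((N : ℝ) / N₁) ^ lam := by
      rw [Real.div_rpow (Nat.cast_nonneg N) (Nat.cast_nonneg N₁)]
      field_simp
    rw [key0, key1]
    exact le_trans key2 key3
  -- assemble the constant
  set c : ℝ := m / (N₁ : ℝ) ^ lam with hcdef
  have hc0 : 0 < c := div_pos hm (Real.rpow_pos_of_pos (by exact_mod_cast hN₁pos) lam)
  set C : ℝ := max ((18:ℝ) ^ lam * J) c⁻¹ + 1 with hCdef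
  have hC0 : 0 < C := by
    have h1 : (0:ℝ) < c⁻¹ := inv_pos.mpr hc0
    have h2 := le_max_right ((18:ℝ) ^ lam * J) c⁻¹
    rw [hCdef]
    linarith
  refine ⟨C, hC0, fun N hN => ?_⟩
  have hNr : (1:ℝ) ≤ N := by exact_mod_cast hN
  have hNpow : (0:ℝ) ≤ (N : ℝ) ^ lam := Real.rpow_nonneg (Nat.cast_nonneg N) lam
  rw [hchg ((2:ℝ) ^ (10 * N) • e1)]
  constructor
  · -- lower bound
    have hCinv : C⁻¹ ≤ c := by
      have h1 : c⁻¹ ≤ C := by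
        rw [hCdef]
        linarith [le_max_right ((18:ℝ) ^ lam * J) c⁻¹]
      calc C⁻¹ ≤ (c⁻¹)⁻¹ := inv_anti₀ (inv_pos.mpr hc0) h1
        _ = c := inv_inv c
    calc C⁻¹ * (N : ℝ) ^ lam ≤ c * (N : ℝ) ^ lam :=
          mul_le_mul_of_nonneg_right hCinv hNpow
      _ ≤ _ := hlowN N hN
  · -- upper bound
    have h1 := hup ((2:ℝ) ^ (10 * N) • e1)
    have hB1 : (1:ℝ) ≤ Real.log (Real.exp 1 + ‖(2:ℝ) ^ (10 * N) • e1‖) :=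
      stmt10_one_le_log (norm_nonneg _)
    have hB9 : Real.log (Real.exp 1 + ‖(2:ℝ) ^ (10 * N) • e1‖) ≤ 9 * N := by
      rw [hnormv N]; exact hBle N hN
    have h2 : (2 * Real.log (Real.exp 1 + ‖(2:ℝ) ^ (10 * N) • e1‖)) ^ lam
        ≤ (18:ℝ) ^ lam * (N : ℝ) ^ lam := by
      rw [← Real.mul_rpow (by norm_num) (Nat.cast_nonneg N)]
      exact Real.rpow_le_rpow (by linarith) (by linarith) hlam
    have h3 : (2 * Real.log (Real.exp 1 + ‖(2:ℝ) ^ (10 * N) • e1‖)) ^ lam * J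
        ≤ (18:ℝ) ^ lam * (N : ℝ) ^ lam * J :=
      mul_le_mul_of_nonneg_right h2 hJ0
    have h4 : ((18:ℝ) ^ lam * J) ≤ C := by
      rw [hCdef]
      linarith [le_max_left ((18:ℝ) ^ lam * J) c⁻¹]
    calc (∫ z : EuclideanSpace ℝ (Fin n),
          ‖β z‖ * (Real.log (Real.exp 1 + ‖z + (2:ℝ) ^ (10 * N) • e1‖)) ^ lam)
        ≤ (2 * Real.log (Real.exp 1 + ‖(2:ℝ) ^ (10 * N) • e1‖)) ^ lam * J := h1
      _ ≤ (18:ℝ) ^ lam * (N : ℝ) ^ lam * J := h3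
      _ = ((18:ℝ) ^ lam * J) * (N : ℝ) ^ lam := by ring
      _ ≤ C * (N : ℝ) ^ lam := mul_le_mul_of_nonneg_right h4 hNpow
end

section
/- Let N ∈ N, ζ_k = 10k, and let η be a Schwartz function on R^n with supp(η̂) ⊂ {|ξ| ≤ 1/100}. Define f(x) = Σ_{k=1}^N η(x + 2^{ζ_N − ζ_k} e_1) e^{2πi⟨x, 2^{ζ_k} e_1⟩} and g(x) = Σ_{k=1}^N η(x + 2^{ζ_N − ζ_k} e_1) e^{−2πi⟨x, 2^{ζ_k} e_1⟩}. Let K(y_1,y_2) = β(y_1 − 2^{ζ_N}e_1)β(y_2 − 2^{ζ_N}e_1) with β radial Schwartz, supp(β̂) ⊂ {10/11 ≤ |ξ| ≤ 11/10}, β̂ = 1 on {20/21 ≤ |ξ| ≤ 21/20}. Then the bilinear operator B(f,g)(x) = Σ_{l∈Z} ∫∫ K̂(2^{-l}ξ_1, 2^{-l}ξ_2) f̂(ξ_1) ĝ(ξ_2) e^{2πi⟨x,ξ_1+ξ_2⟩} dξ_1 dξ_2 satisfies B(f,g)(x) = N·(η(x))² for all x ∈ R^n. -/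
open MeasureTheory Metric
open scoped ENNReal NNReal FourierTransform SchwartzMap RealInnerProductSpace

noncomputable section Stmt13

/-- The first standard basis vector of `ℝ^n`. -/
def stmt13e1 (n : ℕ) (hn : 0 < n) : EuclideanSpace ℝ (Fin n) :=
  EuclideanSpace.single (⟨0, hn⟩ : Fin n) (1 : ℝ)

/-- `f(x) = ∑_{k=1}^N η(x + 2^{ζ_N−ζ_k}e₁) e^{2πi⟨x, 2^{ζ_k}e₁⟩}`, with `ζ_k = 10k`. -/
def stmt13f (n N : ℕ) (hn : 0 < n) (η : SchwartzMap (EuclideanSpace ℝ (Fin n)) ℂ)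
    (x : EuclideanSpace ℝ (Fin n)) : ℂ :=
  ∑ k ∈ Finset.range N,
    η (x + (2 : ℝ) ^ (10 * (N - (k + 1))) • stmt13e1 n hn) *
      Complex.exp (2 * (Real.pi : ℂ) * Complex.I *
        ((⟪x, (2 : ℝ) ^ (10 * (k + 1)) • stmt13e1 n hn⟫ : ℝ) : ℂ))

/-- `g(x) = ∑_{k=1}^N η(x + 2^{ζ_N−ζ_k}e₁) e^{−2πi⟨x, 2^{ζ_k}e₁⟩}`. -/
def stmt13g (n N : ℕ) (hn : 0 < n) (η : SchwartzMap (EuclideanSpace ℝ (Fin n)) ℂ)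
    (x : EuclideanSpace ℝ (Fin n)) : ℂ :=
  ∑ k ∈ Finset.range N,
    η (x + (2 : ℝ) ^ (10 * (N - (k + 1))) • stmt13e1 n hn) *
      Complex.exp (-(2 * (Real.pi : ℂ) * Complex.I *
        ((⟪x, (2 : ℝ) ^ (10 * (k + 1)) • stmt13e1 n hn⟫ : ℝ) : ℂ)))

/-- The Fourier transform (in `ℝ^n`) of the translate `y ↦ β(y − 2^{ζ_N}e₁)`; since
`K(y₁,y₂) = β(y₁−2^{ζ_N}e₁)β(y₂−2^{ζ_N}e₁)` is a tensor product, its `2n`-dimensional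
Fourier transform is `K̂(ξ₁,ξ₂) = stmt13Khat₁(ξ₁) · stmt13Khat₁(ξ₂)`. -/
def stmt13Khat1 (n N : ℕ) (hn : 0 < n) (β : SchwartzMap (EuclideanSpace ℝ (Fin n)) ℂ)
    (ξ : EuclideanSpace ℝ (Fin n)) : ℂ :=
  𝓕 (fun y : EuclideanSpace ℝ (Fin n) => β (y - (2 : ℝ) ^ (10 * N) • stmt13e1 n hn)) ξ

namespace Stmt13Aux

/-- `e2 r = exp(2πi r)`. -/
def e2 (r : ℝ) : ℂ := Complex.exp (2 * (Real.pi : ℂ) * Complex.I * (r : ℂ))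

lemma e2_add (r s : ℝ) : e2 (r + s) = e2 r * e2 s := by
  rw [e2, e2, e2, ← Complex.exp_add]; congr 1; push_cast; ring

lemma e2_zero : e2 0 = 1 := by simp [e2]

lemma e2_eq (r : ℝ) : e2 r = Complex.exp ((2 * Real.pi * r : ℝ) * Complex.I) := by
  rw [e2]; congr 1; push_cast; ring

lemma norm_e2 (r : ℝ) : ‖e2 r‖ = 1 := by
  rw [e2_eq, Complex.norm_exp_ofReal_mul_I]

lemma e2_int (m : ℤ) : e2 (m : ℝ) = 1 := by
  rw [e2, show (2 * (Real.pi : ℂ) * Complex.I * ((m : ℝ) : ℂ))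
    = (m : ℂ) * (2 * Real.pi * Complex.I) by push_cast; ring]
  exact Complex.exp_int_mul_two_pi_mul_I m

lemma e2_neg' (s : ℝ) : Complex.exp ((↑(-2 * Real.pi * s)) * Complex.I) = e2 (-s) := by
  rw [e2_eq]; congr 1; push_cast; ring

lemma continuous_e2 : Continuous e2 := by
  exact Complex.continuous_exp.comp (by continuity)

variable {n : ℕ}

local notation "V" => EuclideanSpace ℝ (Fin n)

lemma integrable_aux (h : 𝓢(V, ℂ)) (a : V) (φ : V → ℝ) (hφ : Continuous φ) :
    Integrable (fun v : V => h (v + a) * e2 (φ v)) := by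
  refine Integrable.mono' (((h.integrable (μ := volume)).comp_add_right a).norm) ?_ ?_
  · exact ((h.continuous.comp (continuous_id.add continuous_const)).mul
      (continuous_e2.comp hφ)).aestronglyMeasurable
  · filter_upwards with v
    rw [norm_mul, norm_e2, mul_one]

/-- Fourier transform of a translated and modulated Schwartz function. -/
lemma ft_shift (h : 𝓢(V, ℂ)) (a b ξ : V) :
    𝓕 (fun y : V => h (y + a) * e2 ⟪y, b⟫) ξ
      = e2 ⟪a, ξ - b⟫ * 𝓕 (h : V → ℂ) (ξ - b) := by
  rw [Real.fourier_eq']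
  have key : ∀ v : V,
      Complex.exp ((↑(-2 * Real.pi * ⟪v, ξ⟫) * Complex.I)) • (h (v + a) * e2 ⟪v, b⟫)
        = (fun u : V => e2 (⟪a, ξ - b⟫ - ⟪u, ξ - b⟫) * h u) (v + a) := by
    intro v
    simp only [smul_eq_mul]
    have hs : (⟪a, ξ - b⟫ - ⟪v + a, ξ - b⟫ : ℝ) = (-⟪v,ξ⟫) + ⟪v,b⟫ := by
      simp only [inner_add_left, inner_sub_right]; ring
    rw [hs, e2_add, ← e2_neg', mul_comm (h (v + a)) (e2 ⟪v, b⟫), ← mul_assoc]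
  rw [show (∫ v : V, Complex.exp ((↑(-2 * Real.pi * ⟪v, ξ⟫) * Complex.I)) • (h (v + a) * e2 ⟪v, b⟫))
      = ∫ v : V, (fun u : V => e2 (⟪a, ξ - b⟫ - ⟪u, ξ - b⟫) * h u) (v + a) by
    exact integral_congr_ae (Filter.Eventually.of_forall key)]
  rw [integral_add_right_eq_self (fun u : V => e2 (⟪a, ξ - b⟫ - ⟪u, ξ - b⟫) * h u) a]
  simp_rw [sub_eq_add_neg (⟪a, ξ - b⟫), e2_add, mul_assoc]
  rw [integral_const_mul]
  congr 1
  rw [Real.fourier_eq']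
  refine integral_congr_ae (Filter.Eventually.of_forall fun u => ?_)
  simp only [smul_eq_mul]
  congr 1
  rw [e2]
  congr 1
  push_cast
  ring

lemma ft_integrable (h : 𝓢(V, ℂ)) : Integrable (𝓕 (h : V → ℂ)) := by
  have : 𝓕 (h : V → ℂ) = (SchwartzMap.fourierTransformCLM ℂ h : V → ℂ) :=
    rfl
  rw [this]
  exact (SchwartzMap.fourierTransformCLM ℂ h).integrable

/-- Fourier inversion with a shift. -/
lemma inv_shift (h : 𝓢(V, ℂ)) (b x : V) :
    (∫ ξ : V, 𝓕 (h : V → ℂ) (ξ - b) * e2 ⟪x, ξ⟫)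
      = e2 ⟪x, b⟫ * h x := by
  rw [← integral_add_right_eq_self (fun ξ : V => 𝓕 (h : V → ℂ) (ξ - b) * e2 ⟪x, ξ⟫) b]
  simp only [add_sub_cancel_right]
  have key : ∀ u : V, 𝓕 (h : V → ℂ) u * e2 ⟪x, u + b⟫
      = e2 ⟪x, b⟫ * (Complex.exp ((↑(2 * Real.pi * ⟪u, x⟫) * Complex.I)) • 𝓕 (h : V → ℂ) u) := by
    intro u
    rw [inner_add_right, e2_add, smul_eq_mul]
    rw [show (⟪u, x⟫ : ℝ) = ⟪x, u⟫ from real_inner_comm x u]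
    rw [e2]
    push_cast
    ring_nf
  rw [integral_congr_ae (Filter.Eventually.of_forall key), integral_const_mul]
  congr 1
  rw [← Real.fourierInv_eq']
  exact h.integrable.fourierInv_fourier_eq (ft_integrable h) h.continuous.continuousAt

/-- The rescaled `β̂` acts as a Kronecker delta on the annuli containing the support of the
pieces of `f̂` and `ĝ`. -/
lemma beta_scale (β : 𝓢(V, ℂ))
    (hβs : ∀ ξ : V, 𝓕 (β : V → ℂ) ξ ≠ 0 → 10 / 11 ≤ ‖ξ‖ ∧ ‖ξ‖ ≤ 11 / 10)
    (hβ1 : ∀ ξ : V, 20 / 21 ≤ ‖ξ‖ → ‖ξ‖ ≤ 21 / 20 → 𝓕 (β : V → ℂ) ξ = 1)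
    (k : ℕ) (l : ℤ) (ξ : V)
    (h1 : (2:ℝ)^(10*(k+1)) - 1/100 ≤ ‖ξ‖) (h2 : ‖ξ‖ ≤ (2:ℝ)^(10*(k+1)) + 1/100) :
    𝓕 (β : V → ℂ) ((2:ℝ)^(-l) • ξ) = if l = 10*((k:ℤ)+1) then 1 else 0 := by
  set T : ℝ := (2:ℝ)^(10*(k+1)) with hTdef
  have hT0 : (0:ℝ) < T := by positivity
  have hT : (1024:ℝ) ≤ T := by
    calc (1024:ℝ) = 2^(10:ℕ) := by norm_num
    _ ≤ T := by exact pow_le_pow_right₀ one_le_two (by omega)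
  have hTinv : T⁻¹ ≤ 1/1024 := by
    rw [inv_le_comm₀ hT0 (by norm_num)]
    linarith
  have hTmul : T⁻¹ * T = 1 := inv_mul_cancel₀ (ne_of_gt hT0)
  have hm' : (2:ℝ)^((10*((k:ℤ)+1)) : ℤ) = T := by
    rw [show (10*((k:ℤ)+1)) = ((10*(k+1) : ℕ) : ℤ) by push_cast; ring, zpow_natCast]
  have hnorm : ‖(2:ℝ)^(-l) • ξ‖ = (2:ℝ)^(-l) * ‖ξ‖ := by
    rw [norm_smul, Real.norm_eq_abs, abs_of_pos (by positivity)]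
  by_cases hl : l = 10*((k:ℤ)+1)
  · rw [if_pos hl]
    have hinv : (2:ℝ)^(-l) = T⁻¹ := by rw [zpow_neg, hl, hm']
    have e1 : T⁻¹ * ‖ξ‖ ≤ T⁻¹ * (T + 1/100) :=
      mul_le_mul_of_nonneg_left h2 (le_of_lt (inv_pos.mpr hT0))
    have e2' : T⁻¹ * (T - 1/100) ≤ T⁻¹ * ‖ξ‖ :=
      mul_le_mul_of_nonneg_left h1 (le_of_lt (inv_pos.mpr hT0))
    apply hβ1
    · rw [hnorm, hinv]; nlinarith [inv_pos.mpr hT0]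
    · rw [hnorm, hinv]; nlinarith [inv_pos.mpr hT0]
  · rw [if_neg hl]
    by_contra hne
    obtain ⟨hA, hB⟩ := hβs _ hne
    rw [hnorm] at hA hB
    have hξ0 : (0:ℝ) ≤ ‖ξ‖ := norm_nonneg ξ
    rcases Ne.lt_or_gt hl with hc | hc
    · -- l < 10(k+1) : the rescaled norm is ≥ 2 − ε > 11/10
      have hu : (2:ℝ)^(1 - (10*((k:ℤ)+1))) ≤ (2:ℝ)^(-l) :=
        zpow_le_zpow_right₀ one_le_two (by omega)
      have hval : (2:ℝ)^(1 - (10*((k:ℤ)+1))) = 2 * T⁻¹ := by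
        rw [sub_eq_add_neg, zpow_add₀ (two_ne_zero), zpow_one, zpow_neg, hm']
      rw [hval] at hu
      have key : (2 * T⁻¹) * (T - 1/100) ≤ (2:ℝ)^(-l) * ‖ξ‖ :=
        mul_le_mul hu h1 (by nlinarith) (le_trans (by positivity) hu)
      nlinarith
    · -- l > 10(k+1) : the rescaled norm is ≤ 1/2 + ε < 10/11
      have hu : (2:ℝ)^(-l) ≤ (2:ℝ)^(-(10*((k:ℤ)+1)) - 1) :=
        zpow_le_zpow_right₀ one_le_two (by omega)
      have hval : (2:ℝ)^(-(10*((k:ℤ)+1)) - 1) = T⁻¹ / 2 := by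
        rw [sub_eq_add_neg, zpow_add₀ (two_ne_zero), zpow_neg, zpow_neg, hm', zpow_one]
        ring
      rw [hval] at hu
      have key : (2:ℝ)^(-l) * ‖ξ‖ ≤ (T⁻¹ / 2) * (T + 1/100) :=
        mul_le_mul hu h2 hξ0 (by positivity)
      nlinarith

/-- Abbreviations for the relevant vectors. -/
def bbv (n : ℕ) (hn : 0 < n) (k : ℕ) : EuclideanSpace ℝ (Fin n) :=
  (2 : ℝ) ^ (10 * (k + 1)) • stmt13e1 n hn

def aav (n N : ℕ) (hn : 0 < n) (k : ℕ) : EuclideanSpace ℝ (Fin n) :=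
  (2 : ℝ) ^ (10 * (N - (k + 1))) • stmt13e1 n hn

def ccv (n N : ℕ) (hn : 0 < n) : EuclideanSpace ℝ (Fin n) :=
  (2 : ℝ) ^ (10 * N) • stmt13e1 n hn

lemma norm_e1 (hn : 0 < n) : ‖stmt13e1 n hn‖ = 1 := by
  rw [stmt13e1, EuclideanSpace.norm_single, norm_one]

lemma inner_e1_self (hn : 0 < n) : (⟪stmt13e1 n hn, stmt13e1 n hn⟫ : ℝ) = 1 := by
  rw [real_inner_self_eq_norm_sq, norm_e1, one_pow]

lemma norm_bbv (hn : 0 < n) (k : ℕ) : ‖bbv n hn k‖ = (2:ℝ)^(10*(k+1)) := by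
  rw [bbv, norm_smul, Real.norm_eq_abs, abs_of_pos (by positivity), norm_e1, mul_one]

/-- Fourier transform of `f`. -/
lemma fhat (N : ℕ) (hn : 0 < n) (η : 𝓢(V, ℂ)) (ξ : V) :
    𝓕 (stmt13f n N hn η) ξ = ∑ k ∈ Finset.range N,
      e2 ⟪aav n N hn k, ξ - bbv n hn k⟫ * 𝓕 (η : V → ℂ) (ξ - bbv n hn k) := by
  have hfeq : stmt13f n N hn η = fun x => ∑ k ∈ Finset.range N,
      η (x + aav n N hn k) * e2 ⟪x, bbv n hn k⟫ := rfl
  rw [hfeq, Real.fourier_eq]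
  simp_rw [Finset.smul_sum]
  rw [integral_finset_sum _ (fun k _ => (Real.fourierIntegral_convergent_iff ξ).2
    (integrable_aux η (aav n N hn k) (fun v => ⟪v, bbv n hn k⟫)
      (continuous_id.inner continuous_const)))]
  exact Finset.sum_congr rfl fun k hk => ft_shift η (aav n N hn k) (bbv n hn k) ξ

lemma exp_neg_e2 (r : ℝ) :
    Complex.exp (-(2 * (Real.pi : ℂ) * Complex.I * (r : ℂ))) = e2 (-r) := by
  rw [e2]; congr 1; push_cast; ring

/-- Fourier transform of `g`. -/
lemma ghat (N : ℕ) (hn : 0 < n) (η : 𝓢(V, ℂ)) (ξ : V) :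
    𝓕 (stmt13g n N hn η) ξ = ∑ k ∈ Finset.range N,
      e2 ⟪aav n N hn k, ξ + bbv n hn k⟫ * 𝓕 (η : V → ℂ) (ξ + bbv n hn k) := by
  have hfeq : stmt13g n N hn η = fun x => ∑ k ∈ Finset.range N,
      η (x + aav n N hn k) * e2 ⟪x, -(bbv n hn k)⟫ := by
    funext x
    unfold stmt13g
    refine Finset.sum_congr rfl fun k hk => ?_
    rw [exp_neg_e2, ← inner_neg_right]
    rfl
  rw [hfeq, Real.fourier_eq]
  simp_rw [Finset.smul_sum]
  rw [integral_finset_sum _ (fun k _ => (Real.fourierIntegral_convergent_iff ξ).2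
    (integrable_aux η (aav n N hn k) (fun v => ⟪v, -(bbv n hn k)⟫)
      (continuous_id.inner continuous_const)))]
  refine Finset.sum_congr rfl fun k hk => ?_
  rw [show (∫ v : V, 𝐞 (-⟪v, ξ⟫) • (η (v + aav n N hn k) * e2 ⟪v, -(bbv n hn k)⟫))
      = e2 ⟪aav n N hn k, ξ - -(bbv n hn k)⟫ * 𝓕 (η : V → ℂ) (ξ - -(bbv n hn k)) from
    ft_shift η (aav n N hn k) (-(bbv n hn k)) ξ, sub_neg_eq_add]

/-- Formula for `stmt13Khat1`. -/
lemma khat (N : ℕ) (hn : 0 < n) (β : 𝓢(V, ℂ)) (ζ : V) :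
    stmt13Khat1 n N hn β ζ = e2 (-⟪ccv n N hn, ζ⟫) * 𝓕 (β : V → ℂ) ζ := by
  unfold stmt13Khat1
  have : (fun y : V => β (y - (2:ℝ)^(10*N) • stmt13e1 n hn))
      = fun y : V => β (y + (-(ccv n N hn))) * e2 ⟪y, (0:V)⟫ := by
    funext y
    rw [inner_zero_right, e2_zero, mul_one, sub_eq_add_neg]
    rfl
  rw [this, ft_shift, sub_zero, inner_neg_left]

/-- Pointwise collapse for the `f` side. -/
lemma master_f (N : ℕ) (hn : 0 < n) (η β : 𝓢(V, ℂ))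
    (hη : ∀ ξ : V, 𝓕 (η : V → ℂ) ξ ≠ 0 → ‖ξ‖ ≤ 1 / 100)
    (hβs : ∀ ξ : V, 𝓕 (β : V → ℂ) ξ ≠ 0 → 10 / 11 ≤ ‖ξ‖ ∧ ‖ξ‖ ≤ 11 / 10)
    (hβ1 : ∀ ξ : V, 20 / 21 ≤ ‖ξ‖ → ‖ξ‖ ≤ 21 / 20 → 𝓕 (β : V → ℂ) ξ = 1)
    (l : ℤ) (ξ : V) :
    stmt13Khat1 n N hn β ((2:ℝ)^(-l) • ξ) * 𝓕 (stmt13f n N hn η) ξ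
      = ∑ k ∈ Finset.range N,
        (if l = 10*((k:ℤ)+1) then 𝓕 (η : V → ℂ) (ξ - bbv n hn k) else 0) := by
  rw [khat, fhat, Finset.mul_sum]
  refine Finset.sum_congr rfl fun k hk => ?_
  have hkN : k + 1 ≤ N := Finset.mem_range.mp hk
  by_cases h0 : 𝓕 (η : V → ℂ) (ξ - bbv n hn k) = 0
  · simp [h0]
  · have hd : ‖ξ - bbv n hn k‖ ≤ 1/100 := hη _ h0
    have hb := norm_bbv hn k
    have hn1 : ‖bbv n hn k‖ - ‖ξ‖ ≤ ‖ξ - bbv n hn k‖ := by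
      rw [← norm_sub_rev]; exact norm_sub_norm_le _ _
    have hn2 : ‖ξ‖ - ‖bbv n hn k‖ ≤ ‖ξ - bbv n hn k‖ := norm_sub_norm_le _ _
    have h1 : (2:ℝ)^(10*(k+1)) - 1/100 ≤ ‖ξ‖ := by linarith
    have h2 : ‖ξ‖ ≤ (2:ℝ)^(10*(k+1)) + 1/100 := by linarith
    rw [beta_scale β hβs hβ1 k l ξ h1 h2]
    by_cases hl : l = 10*((k:ℤ)+1)
    · rw [if_pos hl, if_pos hl]
      have key1 : (2:ℝ)^(-l) * (2:ℝ)^(10*N) = (2:ℝ)^(10*(N-(k+1))) := by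
        have hp : (2:ℝ)^(10*(N-(k+1))) * (2:ℝ)^(10*(k+1)) = (2:ℝ)^(10*N) := by
          rw [← pow_add]; congr 1; omega
        have hz : (2:ℝ)^(-l) = ((2:ℝ)^(10*(k+1) : ℕ))⁻¹ := by
          rw [hl, zpow_neg, show ((10*((k:ℤ)+1)) : ℤ) = ((10*(k+1) : ℕ) : ℤ) by push_cast; ring,
            zpow_natCast]
        rw [hz, inv_mul_eq_iff_eq_mul₀ (by positivity), ← hp]
        ring
      have hAB : (-⟪ccv n N hn, (2:ℝ)^(-l) • ξ⟫ + ⟪aav n N hn k, ξ - bbv n hn k⟫ : ℝ)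
          = -((2:ℝ)^(10*N)) := by
        rw [ccv, aav, bbv, real_inner_smul_right, real_inner_smul_left, real_inner_smul_left,
          inner_sub_right, real_inner_smul_right, inner_e1_self hn]
        have hp : (2:ℝ)^(10*(N-(k+1))) * (2:ℝ)^(10*(k+1)) = (2:ℝ)^(10*N) := by
          rw [← pow_add]; congr 1; omega
        linear_combination (-(⟪stmt13e1 n hn, ξ⟫ : ℝ)) * key1 - hp
      have hone : e2 (-⟪ccv n N hn, (2:ℝ)^(-l) • ξ⟫) * e2 ⟪aav n N hn k, ξ - bbv n hn k⟫ = 1 := by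
        rw [← e2_add, hAB, show (-((2:ℝ)^(10*N))) = (((-(2^(10*N) : ℤ)) : ℤ) : ℝ) by
          push_cast; ring, e2_int]
      calc e2 (-⟪ccv n N hn, (2:ℝ)^(-l) • ξ⟫) * 1
            * (e2 ⟪aav n N hn k, ξ - bbv n hn k⟫ * 𝓕 (η : V → ℂ) (ξ - bbv n hn k))
          = (e2 (-⟪ccv n N hn, (2:ℝ)^(-l) • ξ⟫) * e2 ⟪aav n N hn k, ξ - bbv n hn k⟫)
            * 𝓕 (η : V → ℂ) (ξ - bbv n hn k) := by ring
        _ = 𝓕 (η : V → ℂ) (ξ - bbv n hn k) := by rw [hone, one_mul]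
    · rw [if_neg hl, if_neg hl, mul_zero, zero_mul]

/-- Pointwise collapse for the `g` side. -/
lemma master_g (N : ℕ) (hn : 0 < n) (η β : 𝓢(V, ℂ))
    (hη : ∀ ξ : V, 𝓕 (η : V → ℂ) ξ ≠ 0 → ‖ξ‖ ≤ 1 / 100)
    (hβs : ∀ ξ : V, 𝓕 (β : V → ℂ) ξ ≠ 0 → 10 / 11 ≤ ‖ξ‖ ∧ ‖ξ‖ ≤ 11 / 10)
    (hβ1 : ∀ ξ : V, 20 / 21 ≤ ‖ξ‖ → ‖ξ‖ ≤ 21 / 20 → 𝓕 (β : V → ℂ) ξ = 1)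
    (l : ℤ) (ξ : V) :
    stmt13Khat1 n N hn β ((2:ℝ)^(-l) • ξ) * 𝓕 (stmt13g n N hn η) ξ
      = ∑ k ∈ Finset.range N,
        (if l = 10*((k:ℤ)+1) then 𝓕 (η : V → ℂ) (ξ + bbv n hn k) else 0) := by
  rw [khat, ghat, Finset.mul_sum]
  refine Finset.sum_congr rfl fun k hk => ?_
  have hkN : k + 1 ≤ N := Finset.mem_range.mp hk
  by_cases h0 : 𝓕 (η : V → ℂ) (ξ + bbv n hn k) = 0
  · simp [h0]
  · have hd : ‖ξ + bbv n hn k‖ ≤ 1/100 := hη _ h0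
    have hb := norm_bbv hn k
    have hn1 : ‖bbv n hn k‖ - ‖ξ + bbv n hn k‖ ≤ ‖ξ‖ := by
      have := norm_sub_norm_le (bbv n hn k) (ξ + bbv n hn k)
      rw [show bbv n hn k - (ξ + bbv n hn k) = -ξ by abel, norm_neg] at this
      linarith
    have hn2 : ‖ξ‖ ≤ ‖ξ + bbv n hn k‖ + ‖bbv n hn k‖ := by
      have := norm_add_le (ξ + bbv n hn k) (-(bbv n hn k))
      rw [show ξ + bbv n hn k + -(bbv n hn k) = ξ by abel, norm_neg] at this
      linarith
    have h1 : (2:ℝ)^(10*(k+1)) - 1/100 ≤ ‖ξ‖ := by linarith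
    have h2 : ‖ξ‖ ≤ (2:ℝ)^(10*(k+1)) + 1/100 := by linarith
    rw [beta_scale β hβs hβ1 k l ξ h1 h2]
    by_cases hl : l = 10*((k:ℤ)+1)
    · rw [if_pos hl, if_pos hl]
      have key1 : (2:ℝ)^(-l) * (2:ℝ)^(10*N) = (2:ℝ)^(10*(N-(k+1))) := by
        have hp : (2:ℝ)^(10*(N-(k+1))) * (2:ℝ)^(10*(k+1)) = (2:ℝ)^(10*N) := by
          rw [← pow_add]; congr 1; omega
        have hz : (2:ℝ)^(-l) = ((2:ℝ)^(10*(k+1) : ℕ))⁻¹ := by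
          rw [hl, zpow_neg, show ((10*((k:ℤ)+1)) : ℤ) = ((10*(k+1) : ℕ) : ℤ) by push_cast; ring,
            zpow_natCast]
        rw [hz, inv_mul_eq_iff_eq_mul₀ (by positivity), ← hp]
        ring
      have hAB : (-⟪ccv n N hn, (2:ℝ)^(-l) • ξ⟫ + ⟪aav n N hn k, ξ + bbv n hn k⟫ : ℝ)
          = (2:ℝ)^(10*N) := by
        rw [ccv, aav, bbv, real_inner_smul_right, real_inner_smul_left, real_inner_smul_left,
          inner_add_right, real_inner_smul_right, inner_e1_self hn]
        have hp : (2:ℝ)^(10*(N-(k+1))) * (2:ℝ)^(10*(k+1)) = (2:ℝ)^(10*N) := by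
          rw [← pow_add]; congr 1; omega
        linear_combination (-(⟪stmt13e1 n hn, ξ⟫ : ℝ)) * key1 + hp
      have hone : e2 (-⟪ccv n N hn, (2:ℝ)^(-l) • ξ⟫) * e2 ⟪aav n N hn k, ξ + bbv n hn k⟫ = 1 := by
        rw [← e2_add, hAB, show ((2:ℝ)^(10*N)) = (((2^(10*N) : ℤ) : ℤ) : ℝ) by
          push_cast; ring, e2_int]
      calc e2 (-⟪ccv n N hn, (2:ℝ)^(-l) • ξ⟫) * 1
            * (e2 ⟪aav n N hn k, ξ + bbv n hn k⟫ * 𝓕 (η : V → ℂ) (ξ + bbv n hn k))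
          = (e2 (-⟪ccv n N hn, (2:ℝ)^(-l) • ξ⟫) * e2 ⟪aav n N hn k, ξ + bbv n hn k⟫)
            * 𝓕 (η : V → ℂ) (ξ + bbv n hn k) := by ring
        _ = 𝓕 (η : V → ℂ) (ξ + bbv n hn k) := by rw [hone, one_mul]
    · rw [if_neg hl, if_neg hl, mul_zero, zero_mul]

/-- Evaluation of the `f`-side integral. -/
lemma int_master_f (N : ℕ) (hn : 0 < n) (η β : 𝓢(V, ℂ))
    (hη : ∀ ξ : V, 𝓕 (η : V → ℂ) ξ ≠ 0 → ‖ξ‖ ≤ 1 / 100)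
    (hβs : ∀ ξ : V, 𝓕 (β : V → ℂ) ξ ≠ 0 → 10 / 11 ≤ ‖ξ‖ ∧ ‖ξ‖ ≤ 11 / 10)
    (hβ1 : ∀ ξ : V, 20 / 21 ≤ ‖ξ‖ → ‖ξ‖ ≤ 21 / 20 → 𝓕 (β : V → ℂ) ξ = 1)
    (l : ℤ) (x : V) :
    (∫ ξ : V, stmt13Khat1 n N hn β ((2:ℝ)^(-l) • ξ) * 𝓕 (stmt13f n N hn η) ξ * e2 ⟪x, ξ⟫)
      = ∑ k ∈ Finset.range N,
        (if l = 10*((k:ℤ)+1) then e2 ⟪x, bbv n hn k⟫ * η x else 0) := by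
  have hpt : ∀ ξ : V,
      stmt13Khat1 n N hn β ((2:ℝ)^(-l) • ξ) * 𝓕 (stmt13f n N hn η) ξ * e2 ⟪x, ξ⟫
        = ∑ k ∈ Finset.range N,
          (if l = 10*((k:ℤ)+1) then 𝓕 (η : V → ℂ) (ξ - bbv n hn k) * e2 ⟪x, ξ⟫ else 0) := by
    intro ξ
    rw [master_f N hn η β hη hβs hβ1 l ξ, Finset.sum_mul]
    exact Finset.sum_congr rfl fun k _ => by rw [ite_mul, zero_mul]
  have hint : ∀ k ∈ Finset.range N, Integrable (fun ξ : V =>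
      if l = 10*((k:ℤ)+1) then 𝓕 (η : V → ℂ) (ξ - bbv n hn k) * e2 ⟪x, ξ⟫ else 0) := by
    intro k _
    by_cases hl : l = 10*((k:ℤ)+1)
    · simp only [if_pos hl]
      have hcoe : 𝓕 ((η : V → ℂ)) = ((SchwartzMap.fourierTransformCLM ℂ η : 𝓢(V,ℂ)) : V → ℂ) :=
        rfl
      have := integrable_aux (SchwartzMap.fourierTransformCLM ℂ η) (-(bbv n hn k))
        (fun ξ => ⟪x, ξ⟫) (continuous_const.inner continuous_id)
      refine this.congr (Filter.Eventually.of_forall fun v => ?_)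
      simp only [SchwartzMap.fourierTransformCLM_apply]
      rw [← sub_eq_add_neg]
      rfl
    · simp only [if_neg hl]
      exact integrable_zero _ _ _
  rw [integral_congr_ae (Filter.Eventually.of_forall hpt), integral_finset_sum _ hint]
  refine Finset.sum_congr rfl fun k _ => ?_
  by_cases hl : l = 10*((k:ℤ)+1)
  · simp only [if_pos hl]
    exact inv_shift η (bbv n hn k) x
  · simp only [if_neg hl, integral_zero]

/-- Evaluation of the `g`-side integral. -/
lemma int_master_g (N : ℕ) (hn : 0 < n) (η β : 𝓢(V, ℂ))
    (hη : ∀ ξ : V, 𝓕 (η : V → ℂ) ξ ≠ 0 → ‖ξ‖ ≤ 1 / 100)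
    (hβs : ∀ ξ : V, 𝓕 (β : V → ℂ) ξ ≠ 0 → 10 / 11 ≤ ‖ξ‖ ∧ ‖ξ‖ ≤ 11 / 10)
    (hβ1 : ∀ ξ : V, 20 / 21 ≤ ‖ξ‖ → ‖ξ‖ ≤ 21 / 20 → 𝓕 (β : V → ℂ) ξ = 1)
    (l : ℤ) (x : V) :
    (∫ ξ : V, stmt13Khat1 n N hn β ((2:ℝ)^(-l) • ξ) * 𝓕 (stmt13g n N hn η) ξ * e2 ⟪x, ξ⟫)
      = ∑ k ∈ Finset.range N,
        (if l = 10*((k:ℤ)+1) then e2 ⟪x, -(bbv n hn k)⟫ * η x else 0) := by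
  have hpt : ∀ ξ : V,
      stmt13Khat1 n N hn β ((2:ℝ)^(-l) • ξ) * 𝓕 (stmt13g n N hn η) ξ * e2 ⟪x, ξ⟫
        = ∑ k ∈ Finset.range N,
          (if l = 10*((k:ℤ)+1) then 𝓕 (η : V → ℂ) (ξ + bbv n hn k) * e2 ⟪x, ξ⟫ else 0) := by
    intro ξ
    rw [master_g N hn η β hη hβs hβ1 l ξ, Finset.sum_mul]
    exact Finset.sum_congr rfl fun k _ => by rw [ite_mul, zero_mul]
  have hint : ∀ k ∈ Finset.range N, Integrable (fun ξ : V =>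
      if l = 10*((k:ℤ)+1) then 𝓕 (η : V → ℂ) (ξ + bbv n hn k) * e2 ⟪x, ξ⟫ else 0) := by
    intro k _
    by_cases hl : l = 10*((k:ℤ)+1)
    · simp only [if_pos hl]
      have hcoe : 𝓕 ((η : V → ℂ)) = ((SchwartzMap.fourierTransformCLM ℂ η : 𝓢(V,ℂ)) : V → ℂ) :=
        rfl
      have := integrable_aux (SchwartzMap.fourierTransformCLM ℂ η) (bbv n hn k)
        (fun ξ => ⟪x, ξ⟫) (continuous_const.inner continuous_id)
      refine this.congr (Filter.Eventually.of_forall fun v => ?_)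
      simp only [SchwartzMap.fourierTransformCLM_apply]
      rfl
    · simp only [if_neg hl]
      exact integrable_zero _ _ _
  rw [integral_congr_ae (Filter.Eventually.of_forall hpt), integral_finset_sum _ hint]
  refine Finset.sum_congr rfl fun k _ => ?_
  by_cases hl : l = 10*((k:ℤ)+1)
  · simp only [if_pos hl]
    have := inv_shift η (-(bbv n hn k)) x
    simpa [sub_neg_eq_add] using this
  · simp only [if_neg hl, integral_zero]

end Stmt13Aux

/-- with `f`, `g`, `K` as above, the bilinear multiplier operator
`B(f,g)(x) = ∑_{l∈ℤ} ∬ K̂(2^{-l}ξ₁, 2^{-l}ξ₂) f̂(ξ₁) ĝ(ξ₂) e^{2πi⟨x,ξ₁+ξ₂⟩} dξ₁dξ₂`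
equals `N·η(x)²` for every `x`. -/
theorem stmt13 (n N : ℕ) (hn : 0 < n) (hN : 1 ≤ N)
    (η β : SchwartzMap (EuclideanSpace ℝ (Fin n)) ℂ)
    (hη : ∀ ξ : EuclideanSpace ℝ (Fin n),
      𝓕 (η : EuclideanSpace ℝ (Fin n) → ℂ) ξ ≠ 0 → ‖ξ‖ ≤ 1 / 100)
    (hβs : ∀ ξ : EuclideanSpace ℝ (Fin n),
      𝓕 (β : EuclideanSpace ℝ (Fin n) → ℂ) ξ ≠ 0 → 10 / 11 ≤ ‖ξ‖ ∧ ‖ξ‖ ≤ 11 / 10)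
    (hβ1 : ∀ ξ : EuclideanSpace ℝ (Fin n),
      20 / 21 ≤ ‖ξ‖ → ‖ξ‖ ≤ 21 / 20 → 𝓕 (β : EuclideanSpace ℝ (Fin n) → ℂ) ξ = 1)
    (x : EuclideanSpace ℝ (Fin n)) :
    (∑' l : ℤ, ∫ ξ1 : EuclideanSpace ℝ (Fin n), ∫ ξ2 : EuclideanSpace ℝ (Fin n),
        stmt13Khat1 n N hn β ((2 : ℝ) ^ (-l) • ξ1) *
          stmt13Khat1 n N hn β ((2 : ℝ) ^ (-l) • ξ2) *
          𝓕 (stmt13f n N hn η) ξ1 * 𝓕 (stmt13g n N hn η) ξ2 *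
          Complex.exp (2 * (Real.pi : ℂ) * Complex.I * ((⟪x, ξ1 + ξ2⟫ : ℝ) : ℂ))) =
      (N : ℂ) * (η x) ^ 2 := by
  classical
  open Stmt13Aux in
  have hsummand : ∀ l : ℤ,
      (∫ ξ1 : EuclideanSpace ℝ (Fin n), ∫ ξ2 : EuclideanSpace ℝ (Fin n),
        stmt13Khat1 n N hn β ((2 : ℝ) ^ (-l) • ξ1) *
          stmt13Khat1 n N hn β ((2 : ℝ) ^ (-l) • ξ2) *
          𝓕 (stmt13f n N hn η) ξ1 * 𝓕 (stmt13g n N hn η) ξ2 *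
          Complex.exp (2 * (Real.pi : ℂ) * Complex.I * ((⟪x, ξ1 + ξ2⟫ : ℝ) : ℂ)))
      = (∑ k ∈ Finset.range N,
          (if l = 10*((k:ℤ)+1) then e2 ⟪x, bbv n hn k⟫ * η x else 0))
        * (∑ k ∈ Finset.range N,
          (if l = 10*((k:ℤ)+1) then e2 ⟪x, -(bbv n hn k)⟫ * η x else 0)) := by
    intro l
    have hpt : ∀ ξ1 ξ2 : EuclideanSpace ℝ (Fin n),
        stmt13Khat1 n N hn β ((2 : ℝ) ^ (-l) • ξ1) *
          stmt13Khat1 n N hn β ((2 : ℝ) ^ (-l) • ξ2) *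
          𝓕 (stmt13f n N hn η) ξ1 * 𝓕 (stmt13g n N hn η) ξ2 *
          Complex.exp (2 * (Real.pi : ℂ) * Complex.I * ((⟪x, ξ1 + ξ2⟫ : ℝ) : ℂ))
        = (stmt13Khat1 n N hn β ((2 : ℝ) ^ (-l) • ξ1) * 𝓕 (stmt13f n N hn η) ξ1 * e2 ⟪x, ξ1⟫)
          * (stmt13Khat1 n N hn β ((2 : ℝ) ^ (-l) • ξ2) * 𝓕 (stmt13g n N hn η) ξ2
              * e2 ⟪x, ξ2⟫) := by
      intro ξ1 ξ2
      rw [show Complex.exp (2 * (Real.pi : ℂ) * Complex.I * ((⟪x, ξ1 + ξ2⟫ : ℝ) : ℂ))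
        = e2 ⟪x, ξ1 + ξ2⟫ from rfl, inner_add_right, e2_add]
      ring
    calc (∫ ξ1 : EuclideanSpace ℝ (Fin n), ∫ ξ2 : EuclideanSpace ℝ (Fin n),
        stmt13Khat1 n N hn β ((2 : ℝ) ^ (-l) • ξ1) *
          stmt13Khat1 n N hn β ((2 : ℝ) ^ (-l) • ξ2) *
          𝓕 (stmt13f n N hn η) ξ1 * 𝓕 (stmt13g n N hn η) ξ2 *
          Complex.exp (2 * (Real.pi : ℂ) * Complex.I * ((⟪x, ξ1 + ξ2⟫ : ℝ) : ℂ)))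
        = ∫ ξ1 : EuclideanSpace ℝ (Fin n),
            (stmt13Khat1 n N hn β ((2 : ℝ) ^ (-l) • ξ1) * 𝓕 (stmt13f n N hn η) ξ1 * e2 ⟪x, ξ1⟫)
            * (∫ ξ2 : EuclideanSpace ℝ (Fin n),
                stmt13Khat1 n N hn β ((2 : ℝ) ^ (-l) • ξ2) * 𝓕 (stmt13g n N hn η) ξ2
                  * e2 ⟪x, ξ2⟫) := by
          have hinner : ∀ ξ1 : EuclideanSpace ℝ (Fin n),
              (∫ ξ2 : EuclideanSpace ℝ (Fin n),
                stmt13Khat1 n N hn β ((2 : ℝ) ^ (-l) • ξ1) *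
                  stmt13Khat1 n N hn β ((2 : ℝ) ^ (-l) • ξ2) *
                  𝓕 (stmt13f n N hn η) ξ1 * 𝓕 (stmt13g n N hn η) ξ2 *
                  Complex.exp (2 * (Real.pi : ℂ) * Complex.I * ((⟪x, ξ1 + ξ2⟫ : ℝ) : ℂ)))
                = (stmt13Khat1 n N hn β ((2 : ℝ) ^ (-l) • ξ1) * 𝓕 (stmt13f n N hn η) ξ1
                    * e2 ⟪x, ξ1⟫)
                  * (∫ ξ2 : EuclideanSpace ℝ (Fin n),
                      stmt13Khat1 n N hn β ((2 : ℝ) ^ (-l) • ξ2) * 𝓕 (stmt13g n N hn η) ξ2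
                        * e2 ⟪x, ξ2⟫) := by
            intro ξ1
            rw [← integral_const_mul]
            exact integral_congr_ae (Filter.Eventually.of_forall fun ξ2 => hpt ξ1 ξ2)
          exact integral_congr_ae (Filter.Eventually.of_forall hinner)
      _ = (∫ ξ1 : EuclideanSpace ℝ (Fin n),
            stmt13Khat1 n N hn β ((2 : ℝ) ^ (-l) • ξ1) * 𝓕 (stmt13f n N hn η) ξ1 * e2 ⟪x, ξ1⟫)
          * (∫ ξ2 : EuclideanSpace ℝ (Fin n),
            stmt13Khat1 n N hn β ((2 : ℝ) ^ (-l) • ξ2) * 𝓕 (stmt13g n N hn η) ξ2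
              * e2 ⟪x, ξ2⟫) := integral_mul_const _ _
      _ = _ := by
          rw [int_master_f N hn η β hη hβs hβ1 l x, int_master_g N hn η β hη hβs hβ1 l x]
  rw [tsum_congr hsummand]
  rw [tsum_eq_sum (s := (Finset.range N).image (fun k : ℕ => (10*((k:ℤ)+1))))
    (fun l hl => by
      have hz : ∀ k ∈ Finset.range N, ¬ (l = 10*((k:ℤ)+1)) := fun k hk hEq =>
        hl (Finset.mem_image.mpr ⟨k, hk, hEq.symm⟩)
      rw [Finset.sum_eq_zero (fun k hk => if_neg (hz k hk)), zero_mul])]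
  rw [Finset.sum_image (fun k _ j _ h => by omega)]
  have hterm : ∀ k0 ∈ Finset.range N,
      (∑ k ∈ Finset.range N,
        (if (10*((k0:ℤ)+1) : ℤ) = 10*((k:ℤ)+1) then Stmt13Aux.e2 ⟪x, Stmt13Aux.bbv n hn k⟫ * η x else 0))
      * (∑ k ∈ Finset.range N,
        (if (10*((k0:ℤ)+1) : ℤ) = 10*((k:ℤ)+1) then Stmt13Aux.e2 ⟪x, -(Stmt13Aux.bbv n hn k)⟫ * η x else 0))
      = (η x) ^ 2 := by
    intro k0 hk0
    rw [Finset.sum_eq_single_of_mem k0 hk0 (fun k hk hne => if_neg (by omega)), if_pos rfl,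
      Finset.sum_eq_single_of_mem k0 hk0 (fun k hk hne => if_neg (by omega)), if_pos rfl]
    calc (Stmt13Aux.e2 ⟪x, Stmt13Aux.bbv n hn k0⟫ * η x)
          * (Stmt13Aux.e2 ⟪x, -(Stmt13Aux.bbv n hn k0)⟫ * η x)
        = (Stmt13Aux.e2 ⟪x, Stmt13Aux.bbv n hn k0⟫
            * Stmt13Aux.e2 ⟪x, -(Stmt13Aux.bbv n hn k0)⟫) * (η x * η x) := by ring
      _ = (η x) ^ 2 := by
          rw [← Stmt13Aux.e2_add, ← inner_add_right, add_neg_cancel, inner_zero_right,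
            Stmt13Aux.e2_zero, one_mul, sq]
  rw [Finset.sum_congr rfl hterm, Finset.sum_const, Finset.card_range, nsmul_eq_mul]

end Stmt13
end
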